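/- (Tightness criterion for the upcrossing inequality.) Let a < b and let (X_t)_{t∈ℕ} be a P-martingale such that (a) X_t almost surely never assumes any value strictly between a and b, and (b) every upcrossing is completed exactly at b and every downcrossing exactly at a, i.e., X_{T_{2k}} = b and X_{T_{2k+1}} = a whenever these stopping times are finite, for all k ∈ ℕ. Then for every t ∈ ℕ, E[ U_t(a, b) ] = (1/(b − a)) · E[ max{ a − X_t, 0 } ]. -/

import Mathlib

open MeasureTheory Filter Set
open scoped ENNReal Classical

namespace MartOsc

variable {A : Type*} [Fintype A]

/-- The first `t` symbols of the infinite string `v`. -/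
def prefixList (v : ℕ → A) (t : ℕ) : List A := (List.range t).map v

/-- The cylinder set of all infinite strings having the finite string `u` as a prefix. -/
def cylinder (u : List A) : Set (ℕ → A) := {v | prefixList v u.length = u}

/-- The σ-algebra `F_t` generated by the cylinder sets of strings of length `t`. -/
def Ft (A : Type*) (t : ℕ) : MeasurableSpace (ℕ → A) :=
  .generateFrom {S | ∃ u : List A, u.length = t ∧ S = cylinder u}

/-- The σ-algebra `F_∞` generated by all cylinder sets. -/
def Finf (A : Type*) : MeasurableSpace (ℕ → A) :=
  .generateFrom {S | ∃ u : List A, S = cylinder u}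

/-- `(X_t)` is a `P`-martingale w.r.t. the filtration `(F_t)`:
each `X_t` is `F_t`-measurable and `E[X_t | F_s] = X_s` a.s. for `s < t`. -/
def IsMartingale (P : @Measure (ℕ → A) (Finf A)) (X : ℕ → (ℕ → A) → ℝ) : Prop :=
  (∀ t : ℕ, @Measurable _ _ (Ft A t) _ (X t)) ∧
  ∀ s t : ℕ, s < t → MeasureTheory.condExp (Ft A s) P (X t) =ᵐ[P] X s

/-- `(X_t)` is a `P`-submartingale w.r.t. the filtration `(F_t)`. -/
def IsSubmartingale (P : @Measure (ℕ → A) (Finf A)) (X : ℕ → (ℕ → A) → ℝ) : Prop :=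
  (∀ t : ℕ, @Measurable _ _ (Ft A t) _ (X t)) ∧
  ∀ s t : ℕ, s < t → X s ≤ᵐ[P] MeasureTheory.condExp (Ft A s) P (X t)

/-- The crossing times of a sequence `f`:  `T_0 = 0`,
`T_{2k+1} = inf {t > T_{2k} : f t ≤ a}` and `T_{2k+2} = inf {t > T_{2k+1} : f t ≥ b}`. -/
noncomputable def crossT (f : ℕ → ℝ) (a b : ℝ) : ℕ → ℕ∞
  | 0 => 0
  | k + 1 =>
    sInf ((fun n : ℕ => (n : ℕ∞)) ''
      {n : ℕ | crossT f a b k < (n : ℕ∞) ∧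
        (if (k + 1) % 2 = 1 then f n ≤ a else b ≤ f n)})

/-- The number of upcrossings `U_t(a, b) = sup {k ≥ 0 : T_{2k} ≤ t}` up to time `t`. -/
noncomputable def upBefore (f : ℕ → ℝ) (a b : ℝ) (t : ℕ) : ℕ∞ :=
  sSup ((fun k : ℕ => (k : ℕ∞)) '' {k : ℕ | crossT f a b (2 * k) ≤ (t : ℕ∞)})

/-- The total number of upcrossings `U(a, b) = sup_t U_t(a, b)`. -/
noncomputable def upTotal (f : ℕ → ℝ) (a b : ℝ) : ℕ∞ := ⨆ t : ℕ, upBefore f a b t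

/-- The alternation times `T'_{k,ν}` for `ν ∈ {-1, +1}`. -/
noncomputable def altT (f : ℕ → ℝ) (α : ℝ) (ν : ℝ) : ℕ → ℕ∞
  | 0 => 0
  | k + 1 =>
    sInf ((fun n : ℕ => (n : ℕ∞)) ''
      {n : ℕ | altT f α ν k < (n : ℕ∞) ∧
        (if (k + 1) % 2 = 1 then f n ≤ f (altT f α ν k).toNat - ν * α
         else f (altT f α ν k).toNat + ν * α ≤ f n)})

/-- The number of `α`-alternations `A_t(α) = sup {k ≥ 0 : T'_k ≤ t}` up to time `t`,
where `T'_k = min {T'_{k,-1}, T'_{k,+1}}`. -/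
noncomputable def altBefore (f : ℕ → ℝ) (α : ℝ) (t : ℕ) : ℕ∞ :=
  sSup ((fun k : ℕ => (k : ℕ∞)) ''
    {k : ℕ | min (altT f α (-1) k) (altT f α 1 k) ≤ (t : ℕ∞)})

/-- The total number of `α`-alternations `A(α) = sup_t A_t(α)`. -/
noncomputable def altTotal (f : ℕ → ℝ) (α : ℝ) : ℕ∞ := ⨆ t : ℕ, altBefore f α t

/-- `P` has perpetual entropy: there is `ε > 0` such that for every finite string `u` with
`P(Γ_u) > 0` and every infinite string `v` there are `a ∈ Σ` and `t ∈ ℕ` with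
`ε < P(Γ_{u v_{1:t} a} | Γ_{u v_{1:t}}) < 1 - ε`. -/
def PerpetualEntropy (P : @Measure (ℕ → A) (Finf A)) : Prop :=
  ∃ ε : ℝ≥0∞, 0 < ε ∧ ∀ u : List A, 0 < P (cylinder u) → ∀ v : ℕ → A,
    ∃ a : A, ∃ t : ℕ,
      ε < P (cylinder (u ++ prefixList v t ++ [a])) / P (cylinder (u ++ prefixList v t)) ∧
      P (cylinder (u ++ prefixList v t ++ [a])) / P (cylinder (u ++ prefixList v t)) < 1 - ε

/-! ### pure lemmas -/
section Pure
variable (f : ℕ → ℝ) (a b : ℝ)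

lemma sInf_coe_image (S : Set ℕ) (hS : S.Nonempty) :
    sInf ((fun n : ℕ => (n : ℕ∞)) '' S) = ((sInf S : ℕ) : ℕ∞) :=
  le_antisymm (sInf_le ⟨_, Nat.sInf_mem hS, rfl⟩)
    (le_sInf (by rintro x ⟨n, hn, rfl⟩; show ((sInf S : ℕ) : ℕ∞) ≤ (n : ℕ∞); exact_mod_cast Nat.sInf_le hn))

def crossCond (j n : ℕ) : Prop := if j % 2 = 1 then f n ≤ a else b ≤ f n

lemma crossCond_odd (k n : ℕ) : crossCond f a b (2 * k + 1) n ↔ f n ≤ a := by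
  have h : (2 * k + 1) % 2 = 1 := by omega
  simp [crossCond, h]

lemma crossCond_even (k n : ℕ) : crossCond f a b (2 * k + 2) n ↔ b ≤ f n := by
  have h : (2 * k + 2) % 2 = 0 := by omega
  simp [crossCond, h]

lemma crossT_succ (j : ℕ) :
    crossT f a b (j + 1) = sInf ((fun n : ℕ => (n : ℕ∞)) ''
      {n : ℕ | crossT f a b j < (n : ℕ∞) ∧ crossCond f a b (j + 1) n}) := rfl

lemma crossT_le {j n : ℕ} (h1 : crossT f a b j < (n : ℕ∞))
    (h2 : crossCond f a b (j + 1) n) : crossT f a b (j + 1) ≤ (n : ℕ∞) := by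
  rw [crossT_succ]; exact sInf_le ⟨n, ⟨h1, h2⟩, rfl⟩

lemma crossT_eq_elim {j n : ℕ} (h : crossT f a b (j + 1) = (n : ℕ∞)) :
    crossT f a b j < (n : ℕ∞) ∧ crossCond f a b (j + 1) n := by
  rw [crossT_succ] at h
  rcases ({n : ℕ | crossT f a b j < (n : ℕ∞) ∧ crossCond f a b (j + 1) n}).eq_empty_or_nonempty
    with hS | hS
  · rw [hS] at h; simp at h
  · rw [sInf_coe_image _ hS] at h
    have hmem := Nat.sInf_mem hS
    have : sInf {n : ℕ | crossT f a b j < (n : ℕ∞) ∧ crossCond f a b (j + 1) n} = n := by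
      exact_mod_cast h
    rwa [this] at hmem

lemma crossT_succ_lt (j : ℕ) :
    crossT f a b j < crossT f a b (j + 1) ∨ crossT f a b (j + 1) = ⊤ := by
  rcases ({n : ℕ | crossT f a b j < (n : ℕ∞) ∧ crossCond f a b (j + 1) n}).eq_empty_or_nonempty
    with hS | hS
  · right; rw [crossT_succ, hS]; simp
  · left; rw [crossT_succ, sInf_coe_image _ hS]
    exact (Nat.sInf_mem hS).1

lemma crossT_mono : Monotone (crossT f a b) := by
  apply monotone_nat_of_le_succ
  intro j
  rcases crossT_succ_lt f a b j with h | h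
  · exact h.le
  · rw [h]; exact le_top

lemma le_crossT (j : ℕ) : (j : ℕ∞) ≤ crossT f a b j := by
  induction j with
  | zero => simp
  | succ j ih =>
    rcases crossT_succ_lt f a b j with h | h
    · have : (j : ℕ∞) < crossT f a b (j + 1) := lt_of_le_of_lt ih h
      exact Order.add_one_le_of_lt this
    · rw [h]; exact le_top

lemma crossT_lt_of_lt {j j' : ℕ} (h : j < j') (h' : crossT f a b j' ≠ ⊤) :
    crossT f a b j < crossT f a b j' := by
  obtain ⟨i, rfl⟩ : ∃ i, j' = i + 1 := ⟨j' - 1, by omega⟩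
  have h1 : crossT f a b j ≤ crossT f a b i := crossT_mono f a b (by omega)
  rcases crossT_succ_lt f a b i with h2 | h2
  · exact lt_of_le_of_lt h1 h2
  · exact absurd h2 h'

lemma upBefore_spec (t : ℕ) : ∃ m : ℕ, upBefore f a b t = (m : ℕ∞) ∧
    ∀ k : ℕ, crossT f a b (2 * k) ≤ (t : ℕ∞) ↔ k ≤ m := by
  set Q : ℕ → Prop := fun k => crossT f a b (2 * k) ≤ (t : ℕ∞) with hQ
  have hQ0 : Q 0 := by
    have : crossT f a b (2 * 0) = 0 := rfl
    rw [hQ]; simp only [this]; exact zero_le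
  have hbdd : ∀ k, Q k → k ≤ t := by
    intro k hk
    have h1 : ((2 * k : ℕ) : ℕ∞) ≤ (t : ℕ∞) := le_trans (le_crossT f a b (2 * k)) hk
    have : 2 * k ≤ t := by exact_mod_cast h1
    omega
  set m := Nat.findGreatest Q t with hm
  have hQm : Q m := Nat.findGreatest_spec (Nat.zero_le t) hQ0
  have hiff : ∀ k : ℕ, Q k ↔ k ≤ m := by
    intro k
    constructor
    · intro hk; exact Nat.le_findGreatest (hbdd k hk) hk
    · intro hk
      exact le_trans (crossT_mono f a b (by omega : 2 * k ≤ 2 * m)) hQm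
  refine ⟨m, ?_, hiff⟩
  apply le_antisymm
  · apply sSup_le
    rintro x ⟨k, hk, rfl⟩
    show ((k : ℕ) : ℕ∞) ≤ (m : ℕ∞)
    exact_mod_cast (hiff k).1 hk
  · exact le_sSup ⟨m, hQm, rfl⟩

lemma upBefore_iff (t k : ℕ) :
    crossT f a b (2 * k) ≤ (t : ℕ∞) ↔ k ≤ (upBefore f a b t).toNat := by
  obtain ⟨m, hm, hiff⟩ := upBefore_spec f a b t
  rw [hm, ENat.toNat_coe]; exact hiff k

lemma upBefore_eq_toNat (t : ℕ) :
    upBefore f a b t = ((upBefore f a b t).toNat : ℕ∞) := by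
  obtain ⟨m, hm, _⟩ := upBefore_spec f a b t
  rw [hm, ENat.toNat_coe]

end Pure

/-! ### pathwise upcrossing identity -/
section Path
variable (f : ℕ → ℝ) (a b : ℝ)

def Mid (s : ℕ) : Prop :=
  ∃ k : ℕ, crossT f a b (2 * k + 1) ≤ (s : ℕ∞) ∧ (s : ℕ∞) < crossT f a b (2 * k + 2)

lemma enat_le_coe {x : ℕ∞} {s : ℕ} (h : x ≤ (s : ℕ∞)) : ∃ n : ℕ, x = (n : ℕ∞) ∧ n ≤ s := by
  induction x using ENat.recTopCoe with
  | top => exact absurd h (by simp)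
  | coe n => exact ⟨n, rfl, by exact_mod_cast h⟩

lemma enat_succ_le {t : ℕ} {x : ℕ∞} (h : (t : ℕ∞) < x) : ((t + 1 : ℕ) : ℕ∞) ≤ x := by
  push_cast
  exact Order.add_one_le_of_lt h

lemma enat_squeeze {t : ℕ} {x : ℕ∞} (h1 : (t : ℕ∞) < x) (h2 : x ≤ ((t + 1 : ℕ) : ℕ∞)) :
    x = ((t + 1 : ℕ) : ℕ∞) := le_antisymm h2 (enat_succ_le h1)

variable {f a b}

lemma mid_k_eq {k s : ℕ} (h1 : crossT f a b (2 * k + 1) ≤ (s : ℕ∞))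
    (h2 : (s : ℕ∞) < crossT f a b (2 * k + 2)) : k = (upBefore f a b s).toNat := by
  apply le_antisymm
  · rw [← upBefore_iff]
    have hne : crossT f a b (2 * k + 1) ≠ ⊤ := by
      intro h; rw [h] at h1; exact absurd (le_antisymm le_top h1) (by simp)
    exact le_trans (crossT_lt_of_lt f a b (by omega) hne).le h1
  · by_contra hcon
    have hk1 : k + 1 ≤ (upBefore f a b s).toNat := by omega
    have := (upBefore_iff f a b s (k + 1)).2 hk1
    rw [show 2 * (k + 1) = 2 * k + 2 by ring] at this
    exact absurd h2 (not_lt.2 this)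

lemma mid_f_le (hab : a < b) (hgap : ∀ s, f s ≤ a ∨ b ≤ f s)
    (hc1 : ∀ k n : ℕ, crossT f a b (2 * k + 1) = (n : ℕ∞) → f n = a)
    {k s : ℕ} (h1 : crossT f a b (2 * k + 1) ≤ (s : ℕ∞))
    (h2 : (s : ℕ∞) < crossT f a b (2 * k + 2)) : f s ≤ a := by
  rcases lt_or_eq_of_le h1 with hlt | heq
  · rcases hgap s with h | h
    · exact h
    · exfalso
      have : crossT f a b (2 * k + 2) ≤ (s : ℕ∞) :=
        crossT_le f a b hlt ((crossCond_even f a b k s).2 h)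
      exact absurd h2 (not_lt.2 this)
  · rw [hc1 k s heq]

lemma notmid_facts (hab : a < b) (hgap : ∀ s, f s ≤ a ∨ b ≤ f s)
    (hc2 : ∀ k n : ℕ, crossT f a b (2 * k + 2) = (n : ℕ∞) → f n = b)
    (h0 : a ≤ f 0) {s : ℕ} (hNot : ¬ Mid f a b s) :
    a ≤ f s ∧ (s : ℕ∞) < crossT f a b (2 * (upBefore f a b s).toNat + 1) := by
  set k := (upBefore f a b s).toNat with hk
  have hTk : crossT f a b (2 * k) ≤ (s : ℕ∞) := (upBefore_iff f a b s k).2 le_rfl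
  have h1 : (s : ℕ∞) < crossT f a b (2 * k + 1) := by
    by_contra hcon
    push_neg at hcon
    have h2 : crossT f a b (2 * k + 2) ≤ (s : ℕ∞) := by
      by_contra hcon2
      push_neg at hcon2
      exact hNot ⟨k, hcon, hcon2⟩
    have := (upBefore_iff f a b s (k + 1)).1
      (by rw [show 2 * (k + 1) = 2 * k + 2 by ring]; exact h2)
    omega
  refine ⟨?_, h1⟩
  rcases lt_or_eq_of_le hTk with hlt | heq
  · by_contra hcon
    push_neg at hcon
    have : crossT f a b (2 * k + 1) ≤ (s : ℕ∞) :=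
      crossT_le f a b hlt ((crossCond_odd f a b k s).2 hcon.le)
    exact absurd h1 (not_lt.2 this)
  · rcases k with _ | k'
    · have h0s : (0 : ℕ∞) = (s : ℕ∞) := heq
      have hs0 : s = 0 := by exact_mod_cast h0s.symm
      rw [hs0]; exact h0
    · have : f s = b := hc2 k' s (by rw [show 2 * k' + 2 = 2 * (k' + 1) by ring]; exact heq)
      rw [this]; exact hab.le

theorem pathwise (hab : a < b) (hgap : ∀ s, f s ≤ a ∨ b ≤ f s)
    (hc1 : ∀ k n : ℕ, crossT f a b (2 * k + 1) = (n : ℕ∞) → f n = a)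
    (hc2 : ∀ k n : ℕ, crossT f a b (2 * k + 2) = (n : ℕ∞) → f n = b)
    (h0 : a ≤ f 0) (t : ℕ) :
    ∑ s ∈ Finset.range t, (if Mid f a b s then f (s + 1) - f s else 0)
      = (b - a) * ((upBefore f a b t).toNat : ℝ) - max (a - f t) 0 := by
  induction t with
  | zero =>
    have hN0 : (upBefore f a b 0).toNat = 0 := by
      by_contra hcon
      have h1 : 1 ≤ (upBefore f a b 0).toNat := by omega
      have := (upBefore_iff f a b 0 1).2 h1
      have h2 : ((2 * 1 : ℕ) : ℕ∞) ≤ (0 : ℕ) := le_trans (le_crossT f a b (2 * 1)) this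
      have : (2 : ℕ) ≤ 0 := by exact_mod_cast h2
      omega
    rw [hN0]
    have : max (a - f 0) 0 = 0 := max_eq_right (by linarith)
    simp [this]
  | succ t ih =>
    rw [Finset.sum_range_succ, ih]
    by_cases hM : Mid f a b t
    · obtain ⟨k, hk1, hk2⟩ := hM
      have hkN : k = (upBefore f a b t).toNat := mid_k_eq hk1 hk2
      have hft : f t ≤ a := mid_f_le hab hgap hc1 hk1 hk2
      have htt1 : (t : ℕ∞) < ((t + 1 : ℕ) : ℕ∞) := by exact_mod_cast Nat.lt_succ_self t
      by_cases hup : f (t + 1) ≤ a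
      · -- still mid-upcrossing
        have hmid1 : crossT f a b (2 * k + 1) ≤ ((t + 1 : ℕ) : ℕ∞) :=
          le_trans hk1 htt1.le
        have hmid2 : ((t + 1 : ℕ) : ℕ∞) < crossT f a b (2 * k + 2) := by
          by_contra hcon
          push_neg at hcon
          have heq : crossT f a b (2 * k + 2) = ((t + 1 : ℕ) : ℕ∞) := enat_squeeze hk2 hcon
          have := hc2 k (t + 1) heq
          linarith
        have hNt1 : (upBefore f a b (t + 1)).toNat = k := (mid_k_eq hmid1 hmid2).symm
        have hMt : Mid f a b t := ⟨k, hk1, hk2⟩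
        rw [if_pos hMt, hNt1, ← hkN]
        rw [max_eq_left (by linarith), max_eq_left (by linarith)]
        ring
      · -- upcrossing completes at t+1
        have hb : b ≤ f (t + 1) := (hgap (t + 1)).resolve_left hup
        have hTle : crossT f a b (2 * k + 2) ≤ ((t + 1 : ℕ) : ℕ∞) :=
          crossT_le f a b (lt_of_le_of_lt hk1 htt1) ((crossCond_even f a b k (t + 1)).2 hb)
        have heq : crossT f a b (2 * k + 2) = ((t + 1 : ℕ) : ℕ∞) := enat_squeeze hk2 hTle
        have hfb : f (t + 1) = b := hc2 k (t + 1) heq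
        have hNt1 : (upBefore f a b (t + 1)).toNat = k + 1 := by
          apply le_antisymm
          · by_contra hcon
            have hk2' : k + 2 ≤ (upBefore f a b (t + 1)).toNat := by omega
            have h24 := (upBefore_iff f a b (t + 1) (k + 2)).2 hk2'
            rw [show 2 * (k + 2) = 2 * k + 4 by ring] at h24
            have hne : crossT f a b (2 * k + 4) ≠ ⊤ := by
              intro h
              rw [h] at h24
              exact ENat.coe_ne_top (t + 1) (top_le_iff.mp h24)
            have := crossT_lt_of_lt f a b (show 2 * k + 2 < 2 * k + 4 by omega) hne
            rw [heq] at this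
            exact absurd (lt_of_lt_of_le this h24) (lt_irrefl _)
          · rw [← upBefore_iff, show 2 * (k + 1) = 2 * k + 2 by ring, heq]
        have hMt : Mid f a b t := ⟨k, hk1, hk2⟩
        rw [if_pos hMt, hNt1, ← hkN, hfb]
        rw [max_eq_left (by linarith), max_eq_right (by linarith)]
        push_cast
        ring
    · obtain ⟨hat, hlt⟩ := notmid_facts hab hgap hc2 h0 hM
      set k := (upBefore f a b t).toNat with hk
      have hTk : crossT f a b (2 * k) ≤ (t : ℕ∞) := (upBefore_iff f a b t k).2 le_rfl
      have htt1 : (t : ℕ∞) < ((t + 1 : ℕ) : ℕ∞) := by exact_mod_cast Nat.lt_succ_self t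
      have hatt1 : a ≤ f (t + 1) := by
        rcases hgap (t + 1) with h | h
        · have hle1 : crossT f a b (2 * k + 1) ≤ ((t + 1 : ℕ) : ℕ∞) :=
            crossT_le f a b (lt_of_le_of_lt hTk htt1) ((crossCond_odd f a b k (t + 1)).2 h)
          have heq : crossT f a b (2 * k + 1) = ((t + 1 : ℕ) : ℕ∞) := enat_squeeze hlt hle1
          rw [hc1 k (t + 1) heq]
        · linarith
      have hT2 : ((t + 1 : ℕ) : ℕ∞) < crossT f a b (2 * k + 2) := by
        have h1' : ((t + 1 : ℕ) : ℕ∞) ≤ crossT f a b (2 * k + 1) := enat_succ_le hlt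
        rcases crossT_succ_lt f a b (2 * k + 1) with h2 | h2
        · exact lt_of_le_of_lt h1' h2
        · rw [show 2 * k + 2 = 2 * k + 1 + 1 by ring, h2]
          exact ENat.coe_lt_top (t + 1)
      have hNt1 : (upBefore f a b (t + 1)).toNat = k := by
        apply le_antisymm
        · by_contra hcon
          have hk1' : k + 1 ≤ (upBefore f a b (t + 1)).toNat := by omega
          have := (upBefore_iff f a b (t + 1) (k + 1)).2 hk1'
          rw [show 2 * (k + 1) = 2 * k + 2 by ring] at this
          exact absurd hT2 (not_lt.2 this)
        · rw [← upBefore_iff]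
          exact le_trans hTk htt1.le
      rw [if_neg hM, hNt1, max_eq_right (by linarith), max_eq_right (by linarith)]
      ring

end Path

/-! ### agreement -/
section Agree
variable (a b : ℝ)

lemma crossT_agree (f g : ℕ → ℝ) (s : ℕ) (h : ∀ n ≤ s, f n = g n) (j : ℕ) :
    (crossT f a b j = crossT g a b j ∧ crossT f a b j ≤ (s : ℕ∞)) ∨
      ((s : ℕ∞) < crossT f a b j ∧ (s : ℕ∞) < crossT g a b j) := by
  have hcond : ∀ j' n, n ≤ s → (crossCond f a b j' n ↔ crossCond g a b j' n) := by
    intro j' n hn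
    simp [crossCond, h n hn]
  induction j with
  | zero =>
    left
    exact ⟨rfl, zero_le⟩
  | succ j ih =>
    rcases ih with ⟨heq, hle⟩ | ⟨h1, h2⟩
    · by_cases hle1 : crossT f a b (j + 1) ≤ (s : ℕ∞)
      · left
        obtain ⟨n, hn, hns⟩ := enat_le_coe hle1
        obtain ⟨hgt, hcnd⟩ := crossT_eq_elim f a b hn
        have hg1 : crossT g a b (j + 1) ≤ (n : ℕ∞) :=
          crossT_le g a b (by rw [← heq]; exact hgt) ((hcond (j + 1) n hns).1 hcnd)
        obtain ⟨n', hn', hn's⟩ := enat_le_coe (le_trans hg1 (by exact_mod_cast hns))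
        obtain ⟨hgt', hcnd'⟩ := crossT_eq_elim g a b hn'
        have hf1 : crossT f a b (j + 1) ≤ (n' : ℕ∞) :=
          crossT_le f a b (by rw [heq]; exact hgt') ((hcond (j + 1) n' hn's).2 hcnd')
        exact ⟨le_antisymm (le_trans hf1 (le_of_eq hn'.symm)) (le_trans hg1 (le_of_eq hn.symm)), hle1⟩
      · right
        refine ⟨not_le.1 hle1, ?_⟩
        by_contra hcon
        push_neg at hcon
        obtain ⟨n, hn, hns⟩ := enat_le_coe hcon
        obtain ⟨hgt, hcnd⟩ := crossT_eq_elim g a b hn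
        have : crossT f a b (j + 1) ≤ (n : ℕ∞) :=
          crossT_le f a b (by rw [heq]; exact hgt) ((hcond (j + 1) n hns).2 hcnd)
        exact hle1 (le_trans this (by exact_mod_cast hns))
    · right
      constructor
      · rcases crossT_succ_lt f a b j with hh | hh
        · exact lt_trans h1 hh
        · rw [hh]; exact ENat.coe_lt_top s
      · rcases crossT_succ_lt g a b j with hh | hh
        · exact lt_trans h2 hh
        · rw [hh]; exact ENat.coe_lt_top s

lemma mid_transfer {f g : ℕ → ℝ} {s : ℕ} (h : ∀ n ≤ s, f n = g n)
    (hm : Mid f a b s) : Mid g a b s := by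
  obtain ⟨k, h1, h2⟩ := hm
  rcases crossT_agree a b f g s h (2 * k + 1) with ⟨he, _⟩ | ⟨hgt, _⟩
  · refine ⟨k, by rw [← he]; exact h1, ?_⟩
    rcases crossT_agree a b f g s h (2 * k + 2) with ⟨he2, _⟩ | ⟨_, hg2⟩
    · rw [← he2]; exact h2
    · exact hg2
  · exact absurd h1 (not_le.2 hgt)

lemma upBefore_transfer {f g : ℕ → ℝ} {t : ℕ} (h : ∀ n ≤ t, f n = g n) :
    upBefore f a b t = upBefore g a b t := by
  unfold upBefore
  have hset : {k : ℕ | crossT f a b (2 * k) ≤ (t : ℕ∞)} =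
      {k : ℕ | crossT g a b (2 * k) ≤ (t : ℕ∞)} := by
    ext k
    simp only [Set.mem_setOf_eq]
    rcases crossT_agree a b f g t h (2 * k) with ⟨he, _⟩ | ⟨h1, h2⟩
    · rw [he]
    · exact ⟨fun hh => absurd hh (not_le.2 h1), fun hh => absurd hh (not_le.2 h2)⟩
  rw [hset]


end Agree

/-! ### measurability -/
section Meas
variable {A : Type*} [Fintype A]

lemma prefixList_length (v : ℕ → A) (t : ℕ) : (prefixList v t).length = t := by
  simp [prefixList]

lemma prefixList_eq_iff {v w : ℕ → A} {t : ℕ} :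
    prefixList v t = prefixList w t ↔ ∀ i < t, v i = w i := by
  induction t with
  | zero => simp [prefixList]
  | succ t ih =>
    simp only [prefixList, List.range_succ, List.map_append, List.map_cons, List.map_nil] at *
    constructor
    · intro h
      have h1 := (List.append_inj' h (by rfl)).1
      have h2 := (List.append_inj' h (by rfl)).2
      intro i hi
      rcases Nat.lt_succ_iff_lt_or_eq.1 hi with hi' | hi'
      · exact ih.1 h1 i hi'
      · subst hi'; simpa using h2
    · intro h
      have h1 : (List.range t).map v = (List.range t).map w := ih.2 fun i hi => h i (by omega)
      rw [h1, h t (by omega)]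

lemma prefixList_agree_mono {v w : ℕ → A} {s t : ℕ} (hst : s ≤ t)
    (h : prefixList v t = prefixList w t) : prefixList v s = prefixList w s :=
  prefixList_eq_iff.2 fun i hi => prefixList_eq_iff.1 h i (by omega)

lemma Ft_le_Finf (t : ℕ) : Ft A t ≤ Finf A := by
  apply MeasurableSpace.generateFrom_le
  rintro S ⟨u, _, rfl⟩
  exact MeasurableSpace.measurableSet_generateFrom ⟨u, rfl⟩

def Determined (t : ℕ) (E : Set (ℕ → A)) : Prop :=
  ∀ v w : ℕ → A, prefixList v t = prefixList w t → (v ∈ E ↔ w ∈ E)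

lemma determined_measurableSet {t : ℕ} {E : Set (ℕ → A)} (hE : Determined t E) :
    MeasurableSet[Ft A t] E := by
  have hrepr : E = ⋃ u ∈ {u : List A | u.length = t ∧ cylinder u ⊆ E}, cylinder u := by
    ext v
    constructor
    · intro hv
      have hm1 : prefixList v t ∈ {u : List A | u.length = t ∧ cylinder u ⊆ E} := by
        refine ⟨prefixList_length v t, ?_⟩
        intro w hw
        have hw' : prefixList w ((prefixList v t).length) = prefixList v t := hw
        rw [prefixList_length v t] at hw'
        exact (hE v w hw'.symm).1 hv
      have hm2 : v ∈ cylinder (prefixList v t) := by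
        show prefixList v ((prefixList v t).length) = prefixList v t
        rw [prefixList_length v t]
      exact Set.mem_biUnion hm1 hm2
    · intro hv
      obtain ⟨u, hu, hvu⟩ := Set.mem_iUnion₂.1 hv
      exact hu.2 hvu
  rw [hrepr]
  exact MeasurableSet.biUnion (Set.to_countable _)
    (fun u hu => MeasurableSpace.measurableSet_generateFrom ⟨u, hu.1, rfl⟩)

lemma measurable_of_determined {t : ℕ} {g : (ℕ → A) → ℝ}
    (hg : ∀ v w, prefixList v t = prefixList w t → g v = g w) :
    @Measurable _ _ (Ft A t) _ g := by
  intro S _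
  exact determined_measurableSet (fun v w h => by
    simp only [Set.mem_preimage, hg v w h])

lemma determined_of_measurable {t : ℕ} {g : (ℕ → A) → ℝ}
    (hg : @Measurable _ _ (Ft A t) _ g) :
    ∀ v w, prefixList v t = prefixList w t → g v = g w := by
  have hset : ∀ E : Set (ℕ → A), MeasurableSet[Ft A t] E → Determined t E := by
    intro E hE
    induction E, hE using MeasurableSpace.generateFrom_induction with
    | hC S hS _ =>
      obtain ⟨u, hu, rfl⟩ := hS
      intro v w h
      have : v ∈ cylinder u ↔ prefixList v t = u := by
        simp only [cylinder, Set.mem_setOf_eq, hu]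
      have hw : w ∈ cylinder u ↔ prefixList w t = u := by
        simp only [cylinder, Set.mem_setOf_eq, hu]
      rw [this, hw, h]
    | empty => intro v w _; simp
    | compl S _ ih => intro v w h; simp [Set.mem_compl_iff, ih v w h]
    | iUnion S _ ih =>
      intro v w h
      simp only [Set.mem_iUnion]
      exact exists_congr fun n => ih n v w h
  intro v w h
  have := hset (g ⁻¹' {g v}) (hg (measurableSet_singleton (g v))) v w h
  have h2 : w ∈ g ⁻¹' {g v} := this.1 rfl
  simpa using h2.symm

end Meas

/-- **Tightness criterion for the upcrossing inequality.** If a `P`-martingale a.s. never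
takes values strictly between `a` and `b`, and every upcrossing is completed exactly at `b`
and every downcrossing exactly at `a`, then `E[U_t(a,b)] = (1/(b-a)) E[max{a - X_t, 0}]`
for every `t`. -/
theorem tightness_criterion {A : Type*} [Fintype A] (hA : 1 < Fintype.card A)
    (P : @Measure (ℕ → A) (Finf A)) (hP : IsProbabilityMeasure P)
    (a b : ℝ) (hab : a < b)
    (X : ℕ → (ℕ → A) → ℝ) (hX : IsMartingale P X)
    (hgap : ∀ᵐ v ∂P, ∀ t : ℕ, X t v ≤ a ∨ b ≤ X t v)
    (hcross : ∀ᵐ v ∂P, ∀ k n : ℕ,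
      (crossT (fun s => X s v) a b (2 * k + 1) = (n : ℕ∞) → X n v = a) ∧
      (crossT (fun s => X s v) a b (2 * k + 2) = (n : ℕ∞) → X n v = b)) :
    ∀ t : ℕ,
      ∫⁻ v, ENat.toENNReal (upBefore (fun s => X s v) a b t) ∂P =
        ENNReal.ofReal ((1 / (b - a)) * ∫ v, max (a - X t v) 0 ∂P) := by
  letI : MeasurableSpace (ℕ → A) := Finf A
  haveI := hP
  haveI hNe : Nonempty A := Fintype.card_pos_iff.mp (by omega)
  have hle : ∀ s, Ft A s ≤ Finf A := Ft_le_Finf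
  have hDX : ∀ (s : ℕ) (v w : ℕ → A), prefixList v s = prefixList w s → X s v = X s w :=
    fun s => determined_of_measurable (hX.1 s)
  have hagree : ∀ (s : ℕ) (v w : ℕ → A), prefixList v s = prefixList w s →
      ∀ n ≤ s, X n v = X n w :=
    fun s v w h n hn => hDX n v w (prefixList_agree_mono hn h)
  -- integrability of each `X s`
  have hint : ∀ s, Integrable (X s) P := by
    intro s
    set emb : (Fin s → A) → (ℕ → A) :=
      fun u i => if h : i < s then u ⟨i, h⟩ else Classical.arbitrary A with hemb
    have hkey : ∀ v : ℕ → A, X s (emb (fun i => v i)) = X s v := by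
      intro v
      apply hDX s
      apply prefixList_eq_iff.2
      intro i hi
      simp [hemb, hi]
    have hC : ∀ v : ℕ → A, ‖X s v‖ ≤
        Finset.univ.sup' Finset.univ_nonempty (fun u : Fin s → A => ‖X s (emb u)‖) := by
      intro v
      rw [← hkey v]
      exact Finset.le_sup' (f := fun u : Fin s → A => ‖X s (emb u)‖) (Finset.mem_univ (fun i : Fin s => v i))
    exact (integrable_const _).mono'
      (Measurable.aestronglyMeasurable ((hX.1 s).mono (hle s) le_rfl)) (ae_of_all _ hC)
  -- crossing events
  set E : ℕ → Set (ℕ → A) := fun s => {v | Mid (fun r => X r v) a b s} with hEdef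
  have hEdet : ∀ s, Determined s (E s) := by
    intro s v w h
    have hag := hagree s v w h
    constructor
    · exact fun hv => mid_transfer a b hag hv
    · exact fun hw => mid_transfer a b (fun n hn => (hag n hn).symm) hw
  have hEmeasFt : ∀ s, MeasurableSet[Ft A s] (E s) := fun s => determined_measurableSet (hEdet s)
  have hEmeas : ∀ s, MeasurableSet[Finf A] (E s) := fun s => hle s _ (hEmeasFt s)
  -- martingale increments have zero conditional means on `E s`
  have hzero : ∀ s, ∫ v, (E s).indicator (fun v => X (s + 1) v - X s v) v ∂P = 0 := by
    intro s
    rw [integral_indicator (hEmeas s),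
      integral_sub ((hint (s + 1)).integrableOn) ((hint s).integrableOn)]
    have hm := hX.2 s (s + 1) (Nat.lt_succ_self s)
    have h1 : ∫ v in E s, X (s + 1) v ∂P
        = ∫ v in E s, (MeasureTheory.condExp (Ft A s) P (X (s + 1))) v ∂P :=
      (setIntegral_condExp (hle s) (hint (s + 1)) (hEmeasFt s)).symm
    have h2 : ∫ v in E s, (MeasureTheory.condExp (Ft A s) P (X (s + 1))) v ∂P
        = ∫ v in E s, X s v ∂P :=
      integral_congr_ae (ae_restrict_of_ae hm)
    rw [h1, h2, sub_self]
  -- a.s. `a ≤ X 1` and hence `a ≤ X 0`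
  have h1ae : ∀ᵐ v ∂P, a ≤ X 1 v := by
    filter_upwards [hgap, hcross] with v hg hcr
    rcases hg 1 with h | h
    · have hT1 : crossT (fun r => X r v) a b (2 * 0 + 1) = ((1 : ℕ) : ℕ∞) := by
        apply le_antisymm
        · apply crossT_le
          · show crossT (fun r => X r v) a b (2 * 0) < ((1 : ℕ) : ℕ∞)
            show (0 : ℕ∞) < ((1 : ℕ) : ℕ∞)
            exact_mod_cast Nat.zero_lt_one
          · exact (crossCond_odd (fun r => X r v) a b 0 1).2 h
        · exact le_crossT (fun r => X r v) a b 1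
      rw [(hcr 0 1).1 hT1]
    · linarith
  have h0ae : ∀ᵐ v ∂P, a ≤ X 0 v := by
    have hmart := hX.2 0 1 Nat.zero_lt_one
    have hmono := condExp_mono (m := Ft A 0) (μ := P) (integrable_const a) (hint 1) h1ae
    have hconst : (MeasureTheory.condExp (Ft A 0) P fun _ => a) = fun _ => a :=
      condExp_const (hle 0) a
    rw [hconst] at hmono
    filter_upwards [hmart, hmono] with v h1 h2
    rw [← h1]; exact h2
  intro t
  -- the counting function and its integrability
  have hNdet : ∀ v w : ℕ → A, prefixList v t = prefixList w t →
      (fun v => (((upBefore (fun r => X r v) a b t).toNat : ℕ) : ℝ)) v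
        = (fun v => (((upBefore (fun r => X r v) a b t).toNat : ℕ) : ℝ)) w := by
    intro v w h
    simp only
    rw [upBefore_transfer a b (hagree t v w h)]
  have hNle : ∀ v : ℕ → A, (upBefore (fun r => X r v) a b t).toNat ≤ t := by
    intro v
    have h1 := (upBefore_iff (fun r => X r v) a b t
      ((upBefore (fun r => X r v) a b t).toNat)).2 le_rfl
    have h2 := le_trans (le_crossT (fun r => X r v) a b _) h1
    have h3 : 2 * (upBefore (fun r => X r v) a b t).toNat ≤ t := by exact_mod_cast h2
    omega
  have hNint : Integrable (fun v => (((upBefore (fun r => X r v) a b t).toNat : ℕ) : ℝ)) P := by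
    refine (integrable_const (t : ℝ)).mono'
      (Measurable.aestronglyMeasurable ((measurable_of_determined hNdet).mono (hle t) le_rfl))
      (ae_of_all _ ?_)
    intro v
    rw [Real.norm_eq_abs, abs_of_nonneg (Nat.cast_nonneg _)]
    exact_mod_cast hNle v
  -- pathwise identity, a.e.
  have hpath : ∀ᵐ v ∂P,
      (∑ s ∈ Finset.range t, (E s).indicator (fun v => X (s + 1) v - X s v) v)
        = (b - a) * (((upBefore (fun r => X r v) a b t).toNat : ℕ) : ℝ)
            - max (a - X t v) 0 := by
    filter_upwards [hgap, hcross, h0ae] with v hg hcr h0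
    have hmain := pathwise (f := fun r => X r v) (a := a) (b := b) hab hg
      (fun k n h => (hcr k n).1 h) (fun k n h => (hcr k n).2 h) h0 t
    rw [← hmain]
    apply Finset.sum_congr rfl
    intro s _
    by_cases h : Mid (fun r => X r v) a b s
    · rw [Set.indicator_of_mem (show v ∈ E s from h), if_pos h]
    · rw [Set.indicator_of_notMem (show v ∉ E s from h), if_neg h]
  have hintsum : ∀ s, Integrable ((E s).indicator (fun v => X (s + 1) v - X s v)) P :=
    fun s => ((hint (s + 1)).sub (hint s)).indicator (hEmeas s)
  have hsum0 : ∫ v, (∑ s ∈ Finset.range t,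
      (E s).indicator (fun v => X (s + 1) v - X s v) v) ∂P = 0 := by
    rw [integral_finset_sum _ fun s _ => hintsum s]
    exact Finset.sum_eq_zero fun s _ => hzero s
  have hmaxint : Integrable (fun v => max (a - X t v) 0) P :=
    ((integrable_const a).sub (hint t)).pos_part
  have hba : b - a ≠ 0 := sub_ne_zero.2 hab.ne'
  have heq2 : (b - a) * (∫ v, (((upBefore (fun r => X r v) a b t).toNat : ℕ) : ℝ) ∂P)
      = ∫ v, max (a - X t v) 0 ∂P := by
    have h1 : ∫ v, ((b - a) * (((upBefore (fun r => X r v) a b t).toNat : ℕ) : ℝ)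
        - max (a - X t v) 0) ∂P = 0 := by
      rw [← integral_congr_ae hpath]
      exact hsum0
    rw [integral_sub (hNint.const_mul _) hmaxint, integral_const_mul] at h1
    linarith
  have hfinal : (1 / (b - a)) * ∫ v, max (a - X t v) 0 ∂P
      = ∫ v, (((upBefore (fun r => X r v) a b t).toNat : ℕ) : ℝ) ∂P := by
    rw [← heq2]
    field_simp
  rw [hfinal]
  calc ∫⁻ v, ENat.toENNReal (upBefore (fun s => X s v) a b t) ∂P
      = ∫⁻ v, ENNReal.ofReal ((((upBefore (fun r => X r v) a b t).toNat : ℕ) : ℝ)) ∂P := by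
        apply lintegral_congr
        intro v
        rw [upBefore_eq_toNat]
        rw [ENat.toENNReal_coe, ENNReal.ofReal_natCast, ENat.toNat_coe]
    _ = ENNReal.ofReal (∫ v, (((upBefore (fun r => X r v) a b t).toNat : ℕ) : ℝ) ∂P) :=
        (ofReal_integral_eq_lintegral_ofReal hNint (ae_of_all _ fun v => Nat.cast_nonneg _)).symm


end MartOsc
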